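/- arXiv:2112.10911 — 2 statements merged into one kernel-verified Lean document; each statement's English description precedes it below -/
import Mathlib

section
/- Let R = ℚ(v)[B, ς] be a commutative polynomial ring and [n] = (v^n − v^{−n})/(v − v^{−1}), [m]! = ∏_{k=1}^m [k]. Define the even-parity ı-divided powers B^{(2ℓ+1)}_{0̄} = (1/[2ℓ+1]!)·B·∏_{j=1}^{ℓ}(B² − vς[2j]²) and B^{(2ℓ)}_{0̄} = (1/[2ℓ]!)·B²·∏_{j=1}^{ℓ−1}(B² − vς[2j]²) for ℓ ≥ 1, with B^{(0)}_{0̄} = 1. Then for every ℓ ≥ 0: B·B^{(2ℓ+1)}_{0̄} = [2ℓ+2]·B^{(2ℓ+2)}_{0̄}, and for ℓ ≥ 1, B·B^{(2ℓ)}_{0̄} = [2ℓ+1]·B^{(2ℓ+1)}_{0̄} + vς[2ℓ]·B^{(2ℓ−1)}_{0̄}. -/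
open MvPolynomial

/-- The quantum integer `[n] = (v^n - v^(-n))/(v - v⁻¹)` in `ℚ(v)`. -/
noncomputable def qint (n : ℤ) : RatFunc ℚ :=
  ((RatFunc.X : RatFunc ℚ) ^ n - (RatFunc.X : RatFunc ℚ) ^ (-n)) /
    (RatFunc.X - (RatFunc.X : RatFunc ℚ)⁻¹)

/-- The quantum factorial `[m]! = [1][2]⋯[m]`. -/
noncomputable def qfac (m : ℕ) : RatFunc ℚ :=
  ∏ k ∈ Finset.range m, qint (k + 1)

/-- The polynomial ring `R = ℚ(v)[B, ς]`: `B = X 0`, `ς = X 1`. -/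
noncomputable abbrev R9 := MvPolynomial (Fin 2) (RatFunc ℚ)

noncomputable def B : R9 := X 0
noncomputable def ς : R9 := X 1

/-- Odd-degree, even-parity ı-divided power
`B^{(2ℓ+1)}_{0̄} = (1/[2ℓ+1]!)·B·∏_{j=1}^{ℓ}(B² − vς[2j]²)`. -/
noncomputable def oddDP0 (l : ℕ) : R9 :=
  C (qfac (2 * l + 1))⁻¹ * B *
    ∏ j ∈ Finset.range l, (B ^ 2 - C (RatFunc.X * qint (2 * j + 2) ^ 2) * ς)

/-- Even-degree, even-parity ı-divided power: `B^{(0)}_{0̄} = 1` and, for `ℓ ≥ 1`,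
`B^{(2ℓ)}_{0̄} = (1/[2ℓ]!)·B²·∏_{j=1}^{ℓ−1}(B² − vς[2j]²)`. -/
noncomputable def evenDP0 : ℕ → R9
  | 0 => 1
  | l + 1 =>
      C (qfac (2 * (l + 1)))⁻¹ * B ^ 2 *
        ∏ j ∈ Finset.range l, (B ^ 2 - C (RatFunc.X * qint (2 * j + 2) ^ 2) * ς)

lemma X_pow_ne_one (n : ℕ) (hn : n ≠ 0) : (RatFunc.X : RatFunc ℚ) ^ n ≠ 1 := by
  intro h
  have h2 : (algebraMap (Polynomial ℚ) (RatFunc ℚ)) (Polynomial.X ^ n) =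
      algebraMap (Polynomial ℚ) (RatFunc ℚ) 1 := by
    simpa [map_pow, RatFunc.algebraMap_X] using h
  have := RatFunc.algebraMap_injective ℚ h2
  have := congrArg Polynomial.natDegree this
  simp [Polynomial.natDegree_X_pow] at this
  exact hn this

lemma X_ne_zero' : (RatFunc.X : RatFunc ℚ) ≠ 0 := RatFunc.X_ne_zero

lemma X_zpow_ne_one (n : ℤ) (hn : 0 < n) : (RatFunc.X : RatFunc ℚ) ^ n ≠ 1 := by
  have : n = (n.toNat : ℤ) := (Int.toNat_of_nonneg hn.le).symm
  rw [this, zpow_natCast]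
  exact X_pow_ne_one _ (by omega)

lemma qint_ne_zero (n : ℤ) (hn : 0 < n) : qint n ≠ 0 := by
  have hX : (RatFunc.X : RatFunc ℚ) ≠ 0 := RatFunc.X_ne_zero
  apply div_ne_zero
  · intro h
    have h1 : (RatFunc.X : RatFunc ℚ) ^ n = RatFunc.X ^ (-n) := by linear_combination h
    have h2 : (RatFunc.X : RatFunc ℚ) ^ (2 * n) = 1 := by
      have e : 2 * n = n - -n := by ring
      rw [e, zpow_sub₀ hX, h1, div_self (zpow_ne_zero _ hX)]
    exact X_zpow_ne_one (2 * n) (by omega) h2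
  · intro h
    have h1 : (RatFunc.X : RatFunc ℚ) = RatFunc.X⁻¹ := by linear_combination h
    have h2 : (RatFunc.X : RatFunc ℚ) ^ 2 = 1 := by
      field_simp at h1
      linear_combination h1
    exact X_pow_ne_one 2 (by norm_num) h2

lemma qfac_ne_zero (m : ℕ) : qfac m ≠ 0 := by
  unfold qfac
  exact Finset.prod_ne_zero_iff.mpr fun k _ => qint_ne_zero _ (by positivity)

lemma qfac_succ (m : ℕ) : qfac (m + 1) = qfac m * qint (m + 1) :=
  Finset.prod_range_succ _ m

/-- The recursions for multiplication by `B` on the even-parity ı-divided powers: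
`B·B^{(2ℓ+1)}_{0̄} = [2ℓ+2]·B^{(2ℓ+2)}_{0̄}` for every `ℓ ≥ 0`, and
`B·B^{(2ℓ)}_{0̄} = [2ℓ+1]·B^{(2ℓ+1)}_{0̄} + vς[2ℓ]·B^{(2ℓ−1)}_{0̄}` for every `ℓ ≥ 1`. -/
theorem iDividedPower_even_recursion :
    (∀ l : ℕ, B * oddDP0 l = C (qint (2 * l + 2)) * evenDP0 (l + 1)) ∧
    (∀ l : ℕ, B * evenDP0 (l + 1) = C (qint (2 * (l + 1) + 1)) * oddDP0 (l + 1) +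
      C (RatFunc.X * qint (2 * (l + 1))) * ς * oddDP0 l) := by
  constructor
  · intro l
    simp only [oddDP0, evenDP0]
    set P : R9 := ∏ j ∈ Finset.range l, (B ^ 2 - C (RatFunc.X * qint (2 * j + 2) ^ 2) * ς)
      with hP
    have ha : qfac (2 * l + 1) ≠ 0 := qfac_ne_zero _
    have hq : qint (2 * (l : ℤ) + 2) ≠ 0 := qint_ne_zero _ (by positivity)
    have hfac : qfac (2 * (l + 1)) = qfac (2 * l + 1) * qint (2 * (l : ℤ) + 2) := by
      have h' : 2 * (l + 1) = (2 * l + 1) + 1 := by ring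
      have e : ((2 * l + 1 : ℕ) : ℤ) + 1 = 2 * (l : ℤ) + 2 := by push_cast; ring
      rw [h', qfac_succ, e]
    have h : (C (qint (2 * (l : ℤ) + 2)) : R9) * C (qfac (2 * (l + 1)))⁻¹ =
        C (qfac (2 * l + 1))⁻¹ := by
      rw [← C_mul]
      congr 1
      rw [hfac, mul_inv]
      field_simp
    linear_combination (-(B ^ 2 * P)) * h
  · intro l
    simp only [oddDP0, evenDP0, Finset.prod_range_succ]
    set P : R9 := ∏ j ∈ Finset.range l, (B ^ 2 - C (RatFunc.X * qint (2 * j + 2) ^ 2) * ς)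
      with hP
    have ha : qfac (2 * l + 1) ≠ 0 := qfac_ne_zero _
    have hq : qint (2 * (l : ℤ) + 2) ≠ 0 := qint_ne_zero _ (by positivity)
    have hr : qint (2 * (l : ℤ) + 3) ≠ 0 := qint_ne_zero _ (by positivity)
    have hfac2 : qfac (2 * (l + 1)) = qfac (2 * l + 1) * qint (2 * (l : ℤ) + 2) := by
      have h' : 2 * (l + 1) = (2 * l + 1) + 1 := by ring
      have e : ((2 * l + 1 : ℕ) : ℤ) + 1 = 2 * (l : ℤ) + 2 := by push_cast; ring
      rw [h', qfac_succ, e]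
    have hfac3 : qfac (2 * (l + 1) + 1) = qfac (2 * (l + 1)) * qint (2 * (l : ℤ) + 3) := by
      have e : ((2 * (l + 1) : ℕ) : ℤ) + 1 = 2 * (l : ℤ) + 3 := by push_cast; ring
      rw [qfac_succ, e]
    have ha2 : qfac (2 * (l + 1)) ≠ 0 := qfac_ne_zero _
    have ha3 : qfac (2 * (l + 1) + 1) ≠ 0 := qfac_ne_zero _
    -- coefficient identities
    have h1 : (C (qint (2 * ((l : ℤ) + 1) + 1)) : R9) * C (qfac (2 * (l + 1) + 1))⁻¹ =
        C (qfac (2 * (l + 1)))⁻¹ := by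
      rw [← C_mul]
      congr 1
      have e : (2 * ((l : ℤ) + 1) + 1) = 2 * l + 3 := by ring
      rw [e, hfac3, mul_inv]
      field_simp
    have h2 : (C (RatFunc.X * qint (2 * ((l : ℤ) + 1))) : R9) * C (qfac (2 * l + 1))⁻¹ =
        C (qfac (2 * (l + 1)))⁻¹ * C (RatFunc.X * qint (2 * (l : ℤ) + 2) ^ 2) := by
      rw [← C_mul, ← C_mul]
      congr 1
      have e : (2 * ((l : ℤ) + 1)) = 2 * l + 2 := by ring
      rw [e, hfac2, mul_inv]
      field_simp
    linear_combination (-(B * P * (B ^ 2 - C (RatFunc.X * qint (2 * (l : ℤ) + 2) ^ 2) * ς))) * h1 -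
      (ς * B * P) * h2
end

section
/- Let (W, ≤) be a partially ordered set such that every lower interval {w : w ≤ σ} is finite. Let M be a free ℤ[v, v^{−1}]-module with basis {M_σ : σ ∈ W}, and let ψ : M → M be a ℤ-linear involution satisfying ψ(v^n x) = v^{−n} ψ(x) and ψ(M_σ) ∈ M_σ + Σ_{w < σ} ℤ[v, v^{−1}] M_w for all σ. Then for each σ ∈ W there exists a unique element C_σ ∈ M with ψ(C_σ) = C_σ and C_σ ∈ M_σ + Σ_{w < σ} v^{−1}ℤ[v^{−1}] M_w. -/
open LaurentPolynomial

section KLaux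

variable {W : Type*} [PartialOrder W] {M : Type*} [AddCommGroup M]
  [Module (LaurentPolynomial ℤ) M]

local notation "RR" => LaurentPolynomial ℤ

/-- cast from `ℤ →₀ ℤ` to Laurent polynomials -/
def F2L (p : ℤ →₀ ℤ) : RR := AddMonoidAlgebra.ofCoeff p

lemma F2L_self (p : RR) : F2L p.coeff = p := rfl

lemma F2L_apply (p : ℤ →₀ ℤ) (n : ℤ) : (F2L p).coeff n = p n := rfl

lemma F2L_zero : F2L 0 = 0 := rfl

lemma F2L_single_add (n a : ℤ) (f : ℤ →₀ ℤ) :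
    F2L (Finsupp.single n a + f) = C a * T n + F2L f := by
  show F2L (Finsupp.single n a) + F2L f = _
  rw [show F2L (Finsupp.single n a) = C a * T n from single_eq_C_mul_T a n]

lemma kl_CT_smul (a n : ℤ) (x : M) : (C a * T n : RR) • x = a • ((T n : RR) • x) := by
  rw [mul_smul, eq_intCast (C : ℤ →+* RR) a, Int.cast_smul_eq_zsmul]

/-- nonzero Laurent polynomial has a nonzero coefficient -/
lemma kl_coeff_ne {q : RR} (h : q ≠ 0) : ∃ n : ℤ, q.coeff n ≠ 0 := by
  by_contra hc
  push_neg at hc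
  exact h (LaurentPolynomial.ext fun n => hc n)

/-- The subgroup of elements whose basis coefficients are supported on `S` with
Laurent exponents satisfying `P`. -/
def klgrp (b : Module.Basis W RR M) (S : Set W) (P : ℤ → Prop) : AddSubgroup M where
  carrier := {x | ∀ w n, (b.repr x w).coeff n ≠ 0 → w ∈ S ∧ P n}
  zero_mem' := by
    intro w n h
    rw [map_zero] at h
    simp at h
  add_mem' := by
    intro x y hx hy w n h
    rw [map_add, Finsupp.add_apply, AddMonoidAlgebra.coeff_add, Finsupp.add_apply] at h
    rcases (by by_contra hc; push_neg at hc; rw [hc.1, hc.2] at h; simp at h :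
        (b.repr x w).coeff n ≠ 0 ∨ (b.repr y w).coeff n ≠ 0) with h' | h'
    · exact hx w n h'
    · exact hy w n h'
  neg_mem' := by
    intro x hx w n h
    rw [map_neg, Finsupp.neg_apply, AddMonoidAlgebra.coeff_neg, Finsupp.neg_apply] at h
    exact hx w n (by simpa using h)

lemma klgrp_mem {b : Module.Basis W RR M} {S : Set W} {P : ℤ → Prop} {x : M} :
    x ∈ klgrp b S P ↔ ∀ w n, (b.repr x w).coeff n ≠ 0 → w ∈ S ∧ P n := Iff.rfl

lemma kl_smul_mem_closure (b : Module.Basis W RR M) (S : Set W) (P : ℤ → Prop)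
    (w : W) (hw : w ∈ S) :
    ∀ p : RR, (∀ n : ℤ, p.coeff n ≠ 0 → P n) → p • b w ∈
      AddSubgroup.closure {x : M | ∃ u, u ∈ S ∧ ∃ n : ℤ, P n ∧ x = (T n : RR) • b u} := by
  have key : ∀ q : ℤ →₀ ℤ, (∀ n : ℤ, q n ≠ 0 → P n) → (F2L q) • b w ∈
      AddSubgroup.closure {x : M | ∃ u, u ∈ S ∧ ∃ n : ℤ, P n ∧ x = (T n : RR) • b u} := by
    intro q
    induction q using Finsupp.induction with
    | zero =>
      intro _
      rw [F2L_zero, zero_smul]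
      exact zero_mem _
    | single_add n a f hnf ha ih =>
      intro hp
      have hfn : f n = 0 := Finsupp.notMem_support_iff.1 hnf
      have hPn : P n := by
        apply hp n
        rw [Finsupp.add_apply, Finsupp.single_apply, if_pos rfl, hfn, add_zero]
        exact ha
      have hPf : ∀ m : ℤ, f m ≠ 0 → P m := by
        intro m hm
        apply hp m
        rcases eq_or_ne m n with rfl | hmn
        · rw [hfn] at hm; exact absurd rfl hm
        · rwa [Finsupp.add_apply, Finsupp.single_apply, if_neg (fun h => hmn h.symm),
            zero_add]
      rw [F2L_single_add, add_smul, kl_CT_smul]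
      have hgen : (T n : RR) • b w ∈
          {x : M | ∃ u, u ∈ S ∧ ∃ m : ℤ, P m ∧ x = (T m : RR) • b u} :=
        ⟨w, hw, n, hPn, rfl⟩
      exact add_mem (AddSubgroup.zsmul_mem _ (AddSubgroup.subset_closure hgen) a) (ih hPf)
  exact fun p hp => key p.coeff hp

lemma klgrp_closure (b : Module.Basis W RR M) (S : Set W) (P : ℤ → Prop) :
    AddSubgroup.closure {x : M | ∃ u, u ∈ S ∧ ∃ n : ℤ, P n ∧ x = (T n : RR) • b u}
      = klgrp b S P := by
  classical
  apply le_antisymm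
  · rw [AddSubgroup.closure_le]
    rintro x ⟨u, hu, n, hPn, rfl⟩ w m h
    rw [map_smul, Finsupp.smul_apply, smul_eq_mul, Module.Basis.repr_self,
      Finsupp.single_apply] at h
    by_cases huw : u = w
    · rw [if_pos huw, mul_one] at h
      have hmn : m = n := by
        by_contra hmn
        apply h
        show (Finsupp.single n 1 : ℤ →₀ ℤ) m = 0
        rw [Finsupp.single_apply, if_neg (fun hh => hmn hh.symm)]
      exact ⟨huw ▸ hu, hmn ▸ hPn⟩
    · rw [if_neg huw, mul_zero] at h
      simp at h
  · intro x hx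
    have hrep : (Finsupp.linearCombination RR ⇑b) (b.repr x) = x :=
      b.linearCombination_repr x
    rw [Finsupp.linearCombination_apply, Finsupp.sum] at hrep
    rw [← hrep]
    apply AddSubgroup.sum_mem
    intro w hwsupp
    have hw0 : b.repr x w ≠ 0 := Finsupp.mem_support_iff.1 hwsupp
    obtain ⟨n, hn⟩ := kl_coeff_ne hw0
    exact kl_smul_mem_closure b S P w ((hx w n hn).1) _ (fun m hm => (hx w m hm).2)

lemma kl_psi_smul (ψ : M →+ M)
    (hsemi : ∀ (n : ℤ) (x : M), ψ ((T n : RR) • x) = (T (-n) : RR) • ψ x)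
    (p : RR) (x : M) :
    ψ (p • x) = (LaurentPolynomial.invert p : RR) • ψ x := by
  have key : ∀ q : ℤ →₀ ℤ, ψ ((F2L q) • x) = (LaurentPolynomial.invert (F2L q) : RR) • ψ x := by
    intro q
    induction q using Finsupp.induction with
    | zero => rw [F2L_zero, zero_smul, map_zero, map_zero, zero_smul]
    | single_add n a f hnf ha ih =>
      rw [F2L_single_add, add_smul, kl_CT_smul, map_add, AddMonoidHom.map_zsmul, hsemi,
        ih, map_add, map_mul, invert_T, invert_C, add_smul, kl_CT_smul]
  exact key p.coeff

lemma kl_wf (hfin : ∀ σ : W, {w : W | w ≤ σ}.Finite) :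
    WellFounded ((· < ·) : W → W → Prop) := by
  constructor
  intro σ
  suffices h : ∀ (n : ℕ) (τ : W), (hfin τ).toFinset.card ≤ n → Acc (· < ·) τ from
    h _ σ le_rfl
  intro n
  induction n with
  | zero =>
    intro τ h
    have hmem : τ ∈ (hfin τ).toFinset := (Set.Finite.mem_toFinset _).2 le_rfl
    have := Finset.card_pos.2 ⟨τ, hmem⟩
    omega
  | succ n ih =>
    intro τ hcard
    constructor
    intro w hw
    apply ih
    have hsub' : (hfin w).toFinset ⊆ (hfin τ).toFinset := by
      intro u hu
      rw [Set.Finite.mem_toFinset] at hu ⊢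
      exact le_trans hu (le_of_lt hw)
    have hsub : (hfin w).toFinset ⊂ (hfin τ).toFinset := by
      refine (Finset.ssubset_iff_of_subset hsub').2 ⟨τ, (Set.Finite.mem_toFinset _).2 le_rfl, ?_⟩
      intro hc
      exact absurd ((Set.Finite.mem_toFinset _).1 hc) (not_le_of_gt hw)
    have := Finset.card_lt_card hsub
    omega

lemma kl_unique (b : Module.Basis W RR M) (ψ : M →+ M)
    (hsemi : ∀ (n : ℤ) (x : M), ψ ((T n : RR) • x) = (T (-n) : RR) • ψ x)
    (htri' : ∀ w : W, ψ (b w) - b w ∈ klgrp b {u | u < w} (fun _ => True))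
    (σ : W) (d : M) (hd : ψ d = d)
    (hmem : d ∈ klgrp b {w | w < σ} (fun n => n < 0)) : d = 0 := by
  classical
  by_contra hne
  have hFne : (b.repr d).support.Nonempty :=
    Finsupp.support_nonempty_iff.2 (fun h => hne (b.repr.map_eq_zero_iff.mp h))
  obtain ⟨w₀, hw₀, hmax⟩ : ∃ w₀ ∈ (b.repr d).support, ∀ w ∈ (b.repr d).support, ¬ w₀ < w := by
    obtain ⟨i, hi⟩ := Finset.exists_maximal hFne
    exact ⟨i, hi.1, fun w hw => hi.not_gt hw⟩
  have hrep : d = ∑ w ∈ (b.repr d).support, (b.repr d w) • b w := by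
    conv_lhs => rw [← b.linearCombination_repr d]
    rw [Finsupp.linearCombination_apply, Finsupp.sum]
  have hco : ∀ w ∈ (b.repr d).support,
      b.repr (ψ (b w)) w₀ = if w = w₀ then 1 else 0 := by
    intro w hw
    have h1 : ∀ u, b.repr (ψ (b w) - b w) u ≠ 0 → u < w := by
      intro u hu
      obtain ⟨n, hn⟩ := kl_coeff_ne hu
      exact (htri' w u n hn).1
    have h2 : b.repr (ψ (b w) - b w) w₀ = 0 := by
      by_contra hc
      exact hmax w hw (h1 w₀ hc)
    have h3 : b.repr (ψ (b w)) w₀ = b.repr (b w) w₀ + b.repr (ψ (b w) - b w) w₀ := by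
      rw [map_sub, Finsupp.sub_apply]
      ring
    rw [h3, h2, add_zero, Module.Basis.repr_self, Finsupp.single_apply]
  have hψrep : b.repr (ψ d) w₀ = LaurentPolynomial.invert (b.repr d w₀) := by
    calc b.repr (ψ d) w₀
        = ∑ w ∈ (b.repr d).support,
            (LaurentPolynomial.invert (b.repr d w) : RR) * (b.repr (ψ (b w)) w₀) := by
          conv_lhs => rw [hrep]
          rw [map_sum, map_sum, Finsupp.finset_sum_apply]
          refine Finset.sum_congr rfl fun w hw => ?_
          rw [kl_psi_smul ψ hsemi, map_smul, Finsupp.smul_apply, smul_eq_mul]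
      _ = LaurentPolynomial.invert (b.repr d w₀) := by
          rw [Finset.sum_congr rfl (fun w hw => by
            rw [hco w hw, mul_ite, mul_one, mul_zero]),
            Finset.sum_ite_eq' _ _ (fun w => (LaurentPolynomial.invert (b.repr d w) : RR)),
            if_pos hw₀]
  rw [hd] at hψrep
  have hne0 : b.repr d w₀ ≠ 0 := Finsupp.mem_support_iff.1 hw₀
  obtain ⟨n, hn⟩ := kl_coeff_ne hne0
  have h1 : n < 0 := (hmem w₀ n hn).2
  have h2 : (b.repr d w₀).coeff (-n) ≠ 0 := by
    conv_lhs => rw [hψrep]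
    rw [LaurentPolynomial.invert_apply, neg_neg]
    exact hn
  have h3 : (-n : ℤ) < 0 := (hmem w₀ (-n) h2).2
  omega

/-- negative part of a Laurent polynomial -/
noncomputable def fneg (p : RR) : RR := F2L (Finsupp.filter (fun n : ℤ => n < 0) p.coeff)

lemma kl_fneg_apply (p : RR) (n : ℤ) : (fneg p).coeff n = if n < 0 then p.coeff n else 0 := by
  show (Finsupp.filter (fun n : ℤ => n < 0) p.coeff) n = _
  rw [Finsupp.filter_apply]

lemma kl_fneg_coeff (p : RR) (n : ℤ) (hn : (fneg p).coeff n ≠ 0) : n < 0 := by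
  rw [kl_fneg_apply] at hn
  by_contra h
  rw [if_neg h] at hn
  exact hn rfl

lemma kl_fneg_key (p : RR) (hp : (LaurentPolynomial.invert p : RR) = -p) :
    fneg p - LaurentPolynomial.invert (fneg p) = p := by
  have hpn : ∀ m : ℤ, p.coeff (-m) = -(p.coeff m) := by
    intro m
    have := congrArg (fun q : RR => q.coeff m) hp
    simpa [LaurentPolynomial.invert_apply, AddMonoidAlgebra.coeff_neg, Finsupp.neg_apply] using this
  apply LaurentPolynomial.ext
  intro n
  rw [AddMonoidAlgebra.coeff_sub, Finsupp.sub_apply, LaurentPolynomial.invert_apply, kl_fneg_apply, kl_fneg_apply]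
  rcases lt_trichotomy n 0 with h | h | h
  · rw [if_pos h, if_neg (by omega : ¬ (-n : ℤ) < 0), sub_zero]
  · subst h
    rw [if_neg (by omega : ¬ (0 : ℤ) < 0), neg_zero, if_neg (by omega : ¬ (0 : ℤ) < 0)]
    have h0 := hpn 0
    rw [neg_zero] at h0
    omega
  · rw [if_neg (by omega : ¬ n < 0), if_pos (by omega : (-n : ℤ) < 0), hpn n]
    ring

lemma kl_mul_neg (g h : RR) (hg : ∀ n : ℤ, g.coeff n ≠ 0 → n < 0)
    (hh : ∀ n : ℤ, h.coeff n ≠ 0 → n ≤ 0) : ∀ n : ℤ, (g * h).coeff n ≠ 0 → n < 0 := by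
  classical
  intro n hn
  have hmem : n ∈ (g * h).coeff.support := Finsupp.mem_support_iff.2 hn
  have hsub := AddMonoidAlgebra.support_coeff_mul_subset g h hmem
  rw [Finset.mem_add] at hsub
  obtain ⟨a, ha, c, hc, hac⟩ := hsub
  have h1 := hg a (Finsupp.mem_support_iff.1 ha)
  have h2 := hh c (Finsupp.mem_support_iff.1 hc)
  omega

lemma kl_repr_sum (b : Module.Basis W RR M) (x : M) :
    x = ∑ u ∈ (b.repr x).support, (b.repr x u) • b u := by
  conv_lhs => rw [← b.linearCombination_repr x]
  rw [Finsupp.linearCombination_apply, Finsupp.sum]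

lemma kl_exists (hfin : ∀ σ : W, {w : W | w ≤ σ}.Finite) (b : Module.Basis W RR M) (ψ : M →+ M)
    (hinvol : ∀ x : M, ψ (ψ x) = x)
    (hsemi : ∀ (n : ℤ) (x : M), ψ ((T n : RR) • x) = (T (-n) : RR) • ψ x)
    (htri' : ∀ w : W, ψ (b w) - b w ∈ klgrp b {u | u < w} (fun _ => True)) :
    ∀ σ : W, ∃ c : M, ψ c = c ∧ c - b σ ∈ klgrp b {w | w < σ} (fun n => n < 0) := by
  classical
  intro σ
  refine (kl_wf hfin).induction
    (C := fun σ => ∃ c : M, ψ c = c ∧ c - b σ ∈ klgrp b {w | w < σ} (fun n => n < 0))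
    σ ?_
  clear σ
  intro σ IH
  choose c hc1 hc2 using IH
  haveI : Fintype {w : W // w < σ} := by
    exact Set.Finite.fintype ((hfin σ).subset (fun u hu => le_of_lt hu))
  let cc : {w : W // w < σ} → M := fun i => c i.1 i.2
  have hcc1 : ∀ i : {w : W // w < σ}, ψ (cc i) = cc i := fun i => hc1 i.1 i.2
  have hdiff : ∀ i : {w : W // w < σ}, ∀ (u : W) (n : ℤ),
      (b.repr (cc i - b i.1) u).coeff n ≠ 0 → u < i.1 ∧ n < 0 := fun i => hc2 i.1 i.2
  have hsplit : ∀ (i : {w : W // w < σ}) (u : W),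
      b.repr (cc i) u = b.repr (b i.1) u + b.repr (cc i - b i.1) u := by
    intro i u
    rw [map_sub, Finsupp.sub_apply]
    ring
  have hcc_le : ∀ (i : {w : W // w < σ}) (u : W), b.repr (cc i) u ≠ 0 → u ≤ i.1 := by
    intro i u hu
    by_contra hle
    apply hu
    have h1 : b.repr (b i.1) u = 0 := by
      rw [Module.Basis.repr_self, Finsupp.single_apply, if_neg (fun h => hle (le_of_eq h.symm))]
    have h2 : b.repr (cc i - b i.1) u = 0 := by
      by_contra hcne
      obtain ⟨m, hm⟩ := kl_coeff_ne hcne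
      exact hle (le_of_lt (hdiff i u m hm).1)
    rw [hsplit, h1, h2, add_zero]
  have hcc_diag : ∀ i : {w : W // w < σ}, b.repr (cc i) i.1 = 1 := by
    intro i
    have h2 : b.repr (cc i - b i.1) i.1 = 0 := by
      by_contra hcne
      obtain ⟨m, hm⟩ := kl_coeff_ne hcne
      exact lt_irrefl _ (hdiff i i.1 m hm).1
    rw [hsplit, h2, add_zero, Module.Basis.repr_self, Finsupp.single_apply, if_pos rfl]
  have hcc_le0 : ∀ (i : {w : W // w < σ}) (u : W) (n : ℤ),
      (b.repr (cc i) u).coeff n ≠ 0 → n ≤ 0 := by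
    intro i u n hn
    by_contra hpos
    apply hn
    have heq : (b.repr (cc i) u).coeff n
        = (b.repr (b i.1) u).coeff n + (b.repr (cc i - b i.1) u).coeff n := by
      rw [hsplit, AddMonoidAlgebra.coeff_add, Finsupp.add_apply]
    have h1 : (b.repr (b i.1) u).coeff n = 0 := by
      rw [Module.Basis.repr_self, Finsupp.single_apply]
      by_cases h : i.1 = u
      · rw [if_pos h]
        show (Finsupp.single (0 : ℤ) (1 : ℤ) : ℤ →₀ ℤ) n = 0
        rw [Finsupp.single_apply, if_neg (by omega : ¬ (0 : ℤ) = n)]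
      · rw [if_neg h]
        rfl
    have h2 : (b.repr (cc i - b i.1) u).coeff n = 0 := by
      by_contra hcne
      have := (hdiff i u n hcne).2
      omega
    rw [heq, h1, h2, add_zero]
  -- spanning
  have hspan : ∀ τ : W, τ < σ → b τ ∈ Submodule.span RR (Set.range cc) := by
    intro τ
    refine (kl_wf hfin).induction
      (C := fun τ => τ < σ → b τ ∈ Submodule.span RR (Set.range cc)) τ ?_
    clear τ
    intro τ IHτ hτσ
    have hbase : cc ⟨τ, hτσ⟩ ∈ Submodule.span RR (Set.range cc) :=
      Submodule.subset_span ⟨⟨τ, hτσ⟩, rfl⟩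
    have hdiffmem : cc ⟨τ, hτσ⟩ - b τ ∈ Submodule.span RR (Set.range cc) := by
      rw [kl_repr_sum b (cc ⟨τ, hτσ⟩ - b τ)]
      apply Submodule.sum_mem
      intro u hu
      apply Submodule.smul_mem
      obtain ⟨m, hm⟩ := kl_coeff_ne (Finsupp.mem_support_iff.1 hu)
      have huτ : u < τ := (hdiff ⟨τ, hτσ⟩ u m hm).1
      exact IHτ u huτ (lt_trans huτ hτσ)
    have hbτ : b τ = cc ⟨τ, hτσ⟩ - (cc ⟨τ, hτσ⟩ - b τ) := by abel
    rw [hbτ]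
    exact Submodule.sub_mem _ hbase hdiffmem
  -- independence
  have hind : ∀ s : Finset {w : W // w < σ}, ∀ q : {w : W // w < σ} → RR,
      (∑ i ∈ s, q i • cc i) = 0 → ∀ i ∈ s, q i = 0 := by
    intro s
    induction s using Finset.strongInduction with
    | _ s ih =>
      intro q hsum i hi
      obtain ⟨i₀, hi₀, hmax⟩ : ∃ i₀ ∈ s, ∀ j ∈ s, ¬ i₀ < j :=
          (Finset.exists_maximal (s := s) ⟨i, hi⟩).elim fun k hk => ⟨k, hk.1, fun j hj => hk.not_gt hj⟩
      have hq0 : q i₀ = 0 := by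
        have hzero : b.repr (∑ j ∈ s, q j • cc j) i₀.1 = 0 := by
          rw [hsum, map_zero]
          rfl
        rw [map_sum, Finsupp.finset_sum_apply] at hzero
        have hterm : ∀ j ∈ s, (b.repr (q j • cc j)) i₀.1 = if j = i₀ then q i₀ else 0 := by
          intro j hj
          rw [map_smul, Finsupp.smul_apply, smul_eq_mul]
          by_cases hji : j = i₀
          · rw [if_pos hji, hji, hcc_diag, mul_one]
          · rw [if_neg hji]
            have hz : b.repr (cc j) i₀.1 = 0 := by
              by_contra hcne
              rcases lt_or_eq_of_le (hcc_le j i₀.1 hcne) with hlt | heq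
              · exact hmax j hj (Subtype.coe_lt_coe.1 hlt)
              · exact hji (Subtype.ext heq.symm)
            rw [hz, mul_zero]
        rw [Finset.sum_congr rfl hterm, Finset.sum_ite_eq' s i₀ (fun _ => q i₀),
          if_pos hi₀] at hzero
        exact hzero
      by_cases hii : i = i₀
      · rw [hii]
        exact hq0
      · refine ih (s.erase i₀) (Finset.erase_ssubset hi₀) q ?_ i (Finset.mem_erase.2 ⟨hii, hi⟩)
        rw [Finset.sum_erase s (by rw [hq0, zero_smul])]
        exact hsum
  -- representation of the defect
  have hDspan : ψ (b σ) - b σ ∈ Submodule.span RR (Set.range cc) := by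
    rw [kl_repr_sum b (ψ (b σ) - b σ)]
    apply Submodule.sum_mem
    intro u hu
    apply Submodule.smul_mem
    obtain ⟨m, hm⟩ := kl_coeff_ne (Finsupp.mem_support_iff.1 hu)
    exact hspan u (htri' σ u m hm).1
  obtain ⟨q, hq⟩ := (Submodule.mem_span_range_iff_exists_fun RR).1 hDspan
  have hbar : ∀ i, (LaurentPolynomial.invert (q i) : RR) = -(q i) := by
    have hψD : ψ (ψ (b σ) - b σ) = -(ψ (b σ) - b σ) := by
      rw [map_sub, hinvol, neg_sub]
    have h2 : ψ (∑ i, q i • cc i) = ∑ i, (LaurentPolynomial.invert (q i) : RR) • cc i := by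
      rw [map_sum]
      exact Finset.sum_congr rfl fun i _ => by rw [kl_psi_smul ψ hsemi, hcc1 i]
    have h3 : (∑ i, ((LaurentPolynomial.invert (q i) : RR) + q i) • cc i) = 0 := by
      have h4 : (∑ i, (LaurentPolynomial.invert (q i) : RR) • cc i)
          + (∑ i, q i • cc i) = 0 := by
        calc (∑ i, (LaurentPolynomial.invert (q i) : RR) • cc i) + (∑ i, q i • cc i)
            = ψ (∑ i, q i • cc i) + (∑ i, q i • cc i) := by rw [h2]
          _ = ψ (ψ (b σ) - b σ) + (ψ (b σ) - b σ) := by rw [hq]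
          _ = -(ψ (b σ) - b σ) + (ψ (b σ) - b σ) := by rw [hψD]
          _ = 0 := by abel
      calc (∑ i, ((LaurentPolynomial.invert (q i) : RR) + q i) • cc i)
          = ∑ i, ((LaurentPolynomial.invert (q i) : RR) • cc i + q i • cc i) :=
            Finset.sum_congr rfl fun i _ => add_smul _ _ _
        _ = (∑ i, (LaurentPolynomial.invert (q i) : RR) • cc i) + (∑ i, q i • cc i) :=
            Finset.sum_add_distrib
        _ = 0 := h4
    intro i
    exact eq_neg_of_add_eq_zero_left
      (hind Finset.univ (fun i => (LaurentPolynomial.invert (q i) : RR) + q i) h3 i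
        (Finset.mem_univ i))
  -- the candidate
  refine ⟨b σ + ∑ i, fneg (q i) • cc i, ?_, ?_⟩
  · rw [map_add, map_sum]
    have h1 : ∀ i ∈ Finset.univ, ψ (fneg (q i) • cc i)
        = (LaurentPolynomial.invert (fneg (q i)) : RR) • cc i :=
      fun i _ => by rw [kl_psi_smul ψ hsemi, hcc1 i]
    rw [Finset.sum_congr rfl h1]
    have h2 : ψ (b σ) = b σ + ∑ i, q i • cc i := by
      rw [hq]
      abel
    rw [h2, add_assoc]
    congr 1
    calc (∑ i, q i • cc i) + ∑ i, (LaurentPolynomial.invert (fneg (q i)) : RR) • cc i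
        = ∑ i, (q i + (LaurentPolynomial.invert (fneg (q i)) : RR)) • cc i := by
          rw [← Finset.sum_add_distrib]
          exact Finset.sum_congr rfl fun i _ => (add_smul _ _ _).symm
      _ = ∑ i, fneg (q i) • cc i := by
          refine Finset.sum_congr rfl fun i _ => ?_
          have hk := kl_fneg_key (q i) (hbar i)
          have h4 : q i + (LaurentPolynomial.invert (fneg (q i)) : RR) = fneg (q i) := by
            linear_combination -hk
          rw [h4]
  · have h0 : (b σ + ∑ i, fneg (q i) • cc i) - b σ = ∑ i, fneg (q i) • cc i := by abel
    rw [h0]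
    apply AddSubgroup.sum_mem
    intro i _
    rw [klgrp_mem]
    intro u n hn
    rw [map_smul, Finsupp.smul_apply, smul_eq_mul] at hn
    have hcu : b.repr (cc i) u ≠ 0 := by
      intro h
      apply hn
      rw [h, mul_zero]
      rfl
    exact ⟨lt_of_le_of_lt (hcc_le i u hcu) i.2,
      kl_mul_neg (fneg (q i)) (b.repr (cc i) u) (kl_fneg_coeff _)
        (fun m hm => hcc_le0 i u m hm) n hn⟩

end KLaux

/-- Abstract Kazhdan–Lusztig lemma.  Let `(W, ≤)` be a poset with finite lower intervals,
`M` a free `ℤ[v,v⁻¹]`-module with basis `{M_σ}` (given by `b`), and `ψ` a ℤ-linear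
involution with `ψ(vⁿ x) = v⁻ⁿ ψ(x)` and `ψ(M_σ) ∈ M_σ + Σ_{w<σ} ℤ[v,v⁻¹] M_w`.
Then for each `σ` there is a unique `ψ`-invariant `C_σ ∈ M_σ + Σ_{w<σ} v⁻¹ℤ[v⁻¹] M_w`. -/
theorem abstract_KL_basis {W : Type*} [PartialOrder W]
    (hfin : ∀ σ : W, {w : W | w ≤ σ}.Finite)
    {M : Type*} [AddCommGroup M] [Module (LaurentPolynomial ℤ) M]
    (b : Module.Basis W (LaurentPolynomial ℤ) M)
    (ψ : M →+ M)
    (hinvol : ∀ x : M, ψ (ψ x) = x)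
    (hsemi : ∀ (n : ℤ) (x : M),
      ψ ((T n : LaurentPolynomial ℤ) • x) = (T (-n) : LaurentPolynomial ℤ) • ψ x)
    (htri : ∀ σ : W, ψ (b σ) - b σ ∈
      AddSubgroup.closure {x : M | ∃ w : W, w < σ ∧
        ∃ n : ℤ, x = (T n : LaurentPolynomial ℤ) • b w})
    (σ : W) :
    ∃! c : M, ψ c = c ∧ c - b σ ∈
      AddSubgroup.closure {x : M | ∃ w : W, w < σ ∧
        ∃ n : ℤ, n < 0 ∧ x = (T n : LaurentPolynomial ℤ) • b w} := by
  have hset1 : ∀ τ : W,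
      {x : M | ∃ w : W, w < τ ∧ ∃ n : ℤ, x = (T n : LaurentPolynomial ℤ) • b w}
      = {x : M | ∃ u, u ∈ {u : W | u < τ} ∧ ∃ n : ℤ,
          (fun _ : ℤ => True) n ∧ x = (T n : LaurentPolynomial ℤ) • b u} := by
    intro τ
    ext x
    simp only [Set.mem_setOf_eq, true_and]
  have htri' : ∀ w : W, ψ (b w) - b w ∈ klgrp b {u | u < w} (fun _ => True) := by
    intro w
    have h := htri w
    rwa [hset1 w, klgrp_closure] at h
  have hset2 :
      {x : M | ∃ w : W, w < σ ∧ ∃ n : ℤ, n < 0 ∧ x = (T n : LaurentPolynomial ℤ) • b w}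
      = {x : M | ∃ u, u ∈ {w : W | w < σ} ∧ ∃ n : ℤ,
          n < 0 ∧ x = (T n : LaurentPolynomial ℤ) • b u} := rfl
  have hkey : AddSubgroup.closure
      {x : M | ∃ w : W, w < σ ∧ ∃ n : ℤ, n < 0 ∧ x = (T n : LaurentPolynomial ℤ) • b w}
      = klgrp b {w : W | w < σ} (fun n => n < 0) := by
    rw [hset2, klgrp_closure]
  obtain ⟨C, hC1, hC2⟩ := kl_exists hfin b ψ hinvol hsemi htri' σ
  refine ⟨C, ⟨hC1, by rw [hkey]; exact hC2⟩, ?_⟩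
  rintro y ⟨hy1, hy2⟩
  rw [hkey] at hy2
  have hd : ψ (y - C) = y - C := by rw [map_sub, hy1, hC1]
  have hm : y - C ∈ klgrp b {w | w < σ} (fun n => n < 0) := by
    have he : y - C = (y - b σ) - (C - b σ) := by abel
    rw [he]
    exact sub_mem hy2 hC2
  exact sub_eq_zero.1 (kl_unique b ψ hsemi htri' σ (y - C) hd hm)
end
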